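/- The system β₁ = −ελ₁ + 13λ₁²/(48π²) + 3λ₁λ₂/(20π²) + 27λ₂²/(2500π²) = 0, β₂ = −ελ₂ + λ₁λ₂/(4π²) + 9λ₂²/(50π²) = 0 with ε > 0 has exactly three real solutions: (0,0), (48π²ε/13, 0), and (2π²ε, 25π²ε/9), and the last solution is a double root of the polynomial system (the Jacobian ∂β_i/∂λ_j is singular there). -/

import Mathlib

open Real Polynomial

/-- The one-loop beta functions of the `S₆ × ℤ₂` (restricted Potts) Landau theory. -/
noncomputable def beta2 (ε : ℝ) : Fin 2 → (Fin 2 → ℝ) → ℝ :=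
  ![fun l => -ε * l 0 + 13 * l 0 ^ 2 / (48 * π ^ 2) + 3 * l 0 * l 1 / (20 * π ^ 2)
      + 27 * l 1 ^ 2 / (2500 * π ^ 2),
    fun l => -ε * l 1 + l 0 * l 1 / (4 * π ^ 2) + 9 * l 1 ^ 2 / (50 * π ^ 2)]

/-- The Jacobian matrix `∂βᵢ/∂λⱼ` at the point `p`. -/
noncomputable def jacobian2 (ε : ℝ) (p : Fin 2 → ℝ) : Matrix (Fin 2) (Fin 2) ℝ :=
  Matrix.of fun i j => fderiv ℝ (beta2 ε i) p (Pi.single j 1)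

set_option maxHeartbeats 1000000 in
/-- The `S₆ × ℤ₂` one-loop beta function system has exactly three real solutions,
`(0,0)`, `(48π²ε/13, 0)` and `(2π²ε, 25π²ε/9)`; the last is a double root: the Jacobian
is singular there. -/
theorem stmt_13 (ε : ℝ) (hε : ε > 0) :
    (∀ l₁ l₂ : ℝ,
      (-ε * l₁ + 13 * l₁ ^ 2 / (48 * π ^ 2) + 3 * l₁ * l₂ / (20 * π ^ 2)
          + 27 * l₂ ^ 2 / (2500 * π ^ 2) = 0 ∧
       -ε * l₂ + l₁ * l₂ / (4 * π ^ 2) + 9 * l₂ ^ 2 / (50 * π ^ 2) = 0) ↔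
      ((l₁, l₂) = (0, 0) ∨ (l₁, l₂) = (48 * π ^ 2 * ε / 13, 0) ∨
       (l₁, l₂) = (2 * π ^ 2 * ε, 25 * π ^ 2 * ε / 9))) ∧
    (jacobian2 ε ![2 * π ^ 2 * ε, 25 * π ^ 2 * ε / 9]).det = 0 := by
  have hπ : (π : ℝ) ≠ 0 := Real.pi_ne_zero
  constructor
  ·
    intro l₁ l₂
    constructor
    · rintro ⟨h1, h2⟩
      field_simp at h1 h2
      by_cases hl2 : l₂ = 0
      · subst hl2
        by_cases hl1 : l₁ = 0
        · left; simp [hl1]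
        · right; left
          have hf : (13 * l₁ - 48 * π ^ 2 * ε) * (l₁ * (50000 * π ^ 4)) = 0 := by
            linear_combination π ^ 4 * h1
          have h13 : 13 * l₁ - 48 * π ^ 2 * ε = 0 := by
            rcases mul_eq_zero.mp hf with h | h
            · exact h
            · exact absurd h (mul_ne_zero hl1 (by positivity))
          simp only [Prod.mk.injEq]
          refine ⟨?_, trivial⟩
          field_simp
          linarith
      · right; right
        have hf2 : (25 * l₁ + 18 * l₂ - 100 * π ^ 2 * ε) * (2 * π ^ 2 * l₂) = 0 := by
          linear_combination π ^ 2 * h2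
        have he : 25 * l₁ + 18 * l₂ = 100 * π ^ 2 * ε := by
          rcases mul_eq_zero.mp hf2 with h | h
          · linarith
          · exact absurd h (mul_ne_zero (by positivity) hl2)
        have key' : (25 * l₁ - 18 * l₂) ^ 2 * (80 * π ^ 4) = 0 := by
          linear_combination π ^ 4 * h1 - (24000 * π ^ 4 * l₁) * he
        have key : (25 * l₁ - 18 * l₂) ^ 2 = 0 := by
          rcases mul_eq_zero.mp key' with h | h
          · exact h
          · exact absurd h (by positivity)
        have h25 : 25 * l₁ - 18 * l₂ = 0 := pow_eq_zero_iff two_ne_zero |>.mp key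
        simp only [Prod.mk.injEq]
        constructor
        · linear_combination (1 / 50) * h25 + (1 / 50) * he
        · linear_combination (-1 / 36) * h25 + (1 / 36) * he
    · rintro (h | h | h) <;> rw [Prod.mk.injEq] at h <;> obtain ⟨rfl, rfl⟩ := h <;>
        constructor <;> (field_simp; try ring)
  ·
    set p : Fin 2 → ℝ := ![2 * π ^ 2 * ε, 25 * π ^ 2 * ε / 9] with hp
    have hx : HasFDerivAt (fun l : Fin 2 → ℝ => l 0)
        (ContinuousLinearMap.proj 0 : (Fin 2 → ℝ) →L[ℝ] ℝ) p := hasFDerivAt_apply 0 p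
    have hy : HasFDerivAt (fun l : Fin 2 → ℝ => l 1)
        (ContinuousLinearMap.proj 1 : (Fin 2 → ℝ) →L[ℝ] ℝ) p := hasFDerivAt_apply 1 p
    have e0 : beta2 ε 0 = fun l => -ε * l 0 + (13 / (48 * π ^ 2)) * (l 0 * l 0)
        + (3 / (20 * π ^ 2)) * (l 0 * l 1) + (27 / (2500 * π ^ 2)) * (l 1 * l 1) := by
      funext l
      show -ε * l 0 + 13 * l 0 ^ 2 / (48 * π ^ 2) + 3 * l 0 * l 1 / (20 * π ^ 2)
        + 27 * l 1 ^ 2 / (2500 * π ^ 2) = _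
      ring
    have e1 : beta2 ε 1 = fun l => -ε * l 1 + (1 / (4 * π ^ 2)) * (l 0 * l 1)
        + (9 / (50 * π ^ 2)) * (l 1 * l 1) := by
      funext l
      show -ε * l 1 + l 0 * l 1 / (4 * π ^ 2) + 9 * l 1 ^ 2 / (50 * π ^ 2) = _
      ring
    have hpv0 : p 0 = 2 * π ^ 2 * ε := rfl
    have hpv1 : p 1 = 25 * π ^ 2 * ε / 9 := rfl
    have H0 : HasFDerivAt (beta2 ε 0)
        ((ε / 2) • (ContinuousLinearMap.proj 0 : (Fin 2 → ℝ) →L[ℝ] ℝ)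
          + (9 * ε / 25) • (ContinuousLinearMap.proj 1 : (Fin 2 → ℝ) →L[ℝ] ℝ)) p := by
      rw [e0]
      refine HasFDerivAt.congr_fderiv
        ((((hx.const_mul (-ε)).add
          ((hx.mul hx).const_mul (13 / (48 * π ^ 2)))).add
          ((hx.mul hy).const_mul (3 / (20 * π ^ 2)))).add
          ((hy.mul hy).const_mul (27 / (2500 * π ^ 2)))) ?_
      ext v
      simp [hpv0, hpv1]
      field_simp
      ring
    have H1 : HasFDerivAt (beta2 ε 1)
        ((25 * ε / 36) • (ContinuousLinearMap.proj 0 : (Fin 2 → ℝ) →L[ℝ] ℝ)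
          + (ε / 2) • (ContinuousLinearMap.proj 1 : (Fin 2 → ℝ) →L[ℝ] ℝ)) p := by
      rw [e1]
      refine HasFDerivAt.congr_fderiv
        (((hy.const_mul (-ε)).add ((hx.mul hy).const_mul (1 / (4 * π ^ 2)))).add
          ((hy.mul hy).const_mul (9 / (50 * π ^ 2)))) ?_
      ext v
      simp [hpv0, hpv1]
      field_simp
      ring
    simp only [jacobian2, Matrix.det_fin_two, Matrix.of_apply, H0.fderiv, H1.fderiv]
    simp [Pi.single_apply]
    ring
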